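/- Let A be a d x d real matrix with ||A - I||_op < 1. Then Tr(A - I) - log(det A) <= ||A - I||_F^2 / (2 (1 - ||A - I||_op)). In particular det A > 0. -/

import Mathlib

open Matrix

/-- The ℓ²→ℓ² operator (spectral) norm of a real square matrix. -/
noncomputable def matOpNorm {d : ℕ} (A : Matrix (Fin d) (Fin d) ℝ) : ℝ :=
  ‖(Matrix.toEuclideanCLM (𝕜 := ℝ) A : EuclideanSpace ℝ (Fin d) →L[ℝ] EuclideanSpace ℝ (Fin d))‖

/-- The Frobenius norm of a real square matrix. -/
noncomputable def matFrobNorm {d : ℕ} (A : Matrix (Fin d) (Fin d) ℝ) : ℝ :=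
  Real.sqrt (∑ i, ∑ j, (A i j) ^ 2)

namespace RumpAux

variable {d : ℕ}

lemma frob_nonneg (A : Matrix (Fin d) (Fin d) ℝ) : 0 ≤ matFrobNorm A :=
  Real.sqrt_nonneg _

lemma op_nonneg (A : Matrix (Fin d) (Fin d) ℝ) : 0 ≤ matOpNorm A := by
  unfold matOpNorm; exact norm_nonneg _

lemma frob_sq (A : Matrix (Fin d) (Fin d) ℝ) :
    matFrobNorm A ^ 2 = ∑ i, ∑ j, A i j ^ 2 :=
  Real.sq_sqrt (by positivity)

lemma euclid_norm_eq (y : Fin d → ℝ) :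
    ‖(WithLp.equiv 2 (Fin d → ℝ)).symm y‖ = Real.sqrt (∑ i, y i ^ 2) := by
  rw [EuclideanSpace.norm_eq]
  congr 1
  refine Finset.sum_congr rfl fun i _ => ?_
  rw [WithLp.equiv_symm_apply, WithLp.ofLp_toLp, Real.norm_eq_abs, sq_abs]

lemma mulVec_sq_le (C : Matrix (Fin d) (Fin d) ℝ) (x : Fin d → ℝ) :
    ∑ i, (C.mulVec x i) ^ 2 ≤ matOpNorm C ^ 2 * ∑ i, x i ^ 2 := by
  have h := (Matrix.toEuclideanCLM (𝕜 := ℝ) C).le_opNorm ((WithLp.equiv 2 (Fin d → ℝ)).symm x)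
  rw [WithLp.equiv_symm_apply, Matrix.toEuclideanCLM_toLp, ← WithLp.equiv_symm_apply, euclid_norm_eq,
    euclid_norm_eq] at h
  have h1 : Real.sqrt (∑ i, (C.mulVec x i) ^ 2) ^ 2 ≤
      (matOpNorm C * Real.sqrt (∑ i, x i ^ 2)) ^ 2 := by
    apply pow_le_pow_left₀ (Real.sqrt_nonneg _) h 2
  rw [Real.sq_sqrt (by positivity), mul_pow, Real.sq_sqrt (by positivity)] at h1
  exact h1

lemma frob_mul_le (C B : Matrix (Fin d) (Fin d) ℝ) :
    matFrobNorm (C * B) ≤ matOpNorm C * matFrobNorm B := by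
  have key : ∑ i, ∑ j, ((C * B) i j) ^ 2 ≤ matOpNorm C ^ 2 * ∑ i, ∑ j, (B i j) ^ 2 := by
    rw [Finset.sum_comm]
    calc ∑ j, ∑ i, ((C * B) i j) ^ 2
        ≤ ∑ j, (matOpNorm C ^ 2 * ∑ i, (B i j) ^ 2) := by
          refine Finset.sum_le_sum fun j _ => ?_
          have h := mulVec_sq_le C (fun k => B k j)
          simpa [Matrix.mul_apply, Matrix.mulVec, dotProduct] using h
      _ = matOpNorm C ^ 2 * ∑ i, ∑ j, (B i j) ^ 2 := by
          rw [← Finset.mul_sum, Finset.sum_comm]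
  have h2 : matFrobNorm (C * B) ≤ Real.sqrt (matOpNorm C ^ 2 * ∑ i, ∑ j, (B i j) ^ 2) :=
    Real.sqrt_le_sqrt key
  rwa [Real.sqrt_mul (sq_nonneg _), Real.sqrt_sq (op_nonneg C), ← matFrobNorm] at h2

lemma abs_trace_mul_le (X Y : Matrix (Fin d) (Fin d) ℝ) :
    |(X * Y).trace| ≤ matFrobNorm X * matFrobNorm Y := by
  have ht : (X * Y).trace = ∑ p : Fin d × Fin d, X p.1 p.2 * Y p.2 p.1 := by
    rw [Matrix.trace, Fintype.sum_prod_type]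
    simp [Matrix.diag, Matrix.mul_apply]
  have cs := Finset.sum_mul_sq_le_sq_mul_sq Finset.univ
    (fun p : Fin d × Fin d => X p.1 p.2) (fun p => Y p.2 p.1)
  have h1 : ∑ p : Fin d × Fin d, (X p.1 p.2) ^ 2 = ∑ i, ∑ j, X i j ^ 2 :=
    Fintype.sum_prod_type _
  have h2 : ∑ p : Fin d × Fin d, (Y p.2 p.1) ^ 2 = ∑ i, ∑ j, Y i j ^ 2 := by
    rw [Fintype.sum_prod_type, Finset.sum_comm]
  calc |(X * Y).trace| = Real.sqrt (((X * Y).trace) ^ 2) := (Real.sqrt_sq_eq_abs _).symm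
    _ ≤ Real.sqrt ((∑ i, ∑ j, X i j ^ 2) * ∑ i, ∑ j, Y i j ^ 2) := by
        apply Real.sqrt_le_sqrt
        rw [ht]
        calc (∑ p : Fin d × Fin d, X p.1 p.2 * Y p.2 p.1) ^ 2
            ≤ (∑ p : Fin d × Fin d, (X p.1 p.2) ^ 2) * ∑ p : Fin d × Fin d, (Y p.2 p.1) ^ 2 := cs
          _ = _ := by rw [h1, h2]
    _ = matFrobNorm X * matFrobNorm Y := by
        rw [Real.sqrt_mul (by positivity)]; rfl

lemma trace_triple_le (C B : Matrix (Fin d) (Fin d) ℝ) :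
    (C * B * B).trace ≤ matOpNorm C * matFrobNorm B ^ 2 := by
  calc (C * B * B).trace ≤ |((C * B) * B).trace| := le_abs_self _
    _ ≤ matFrobNorm (C * B) * matFrobNorm B := abs_trace_mul_le _ _
    _ ≤ (matOpNorm C * matFrobNorm B) * matFrobNorm B := by
        apply mul_le_mul_of_nonneg_right (frob_mul_le C B) (frob_nonneg B)
    _ = matOpNorm C * matFrobNorm B ^ 2 := by ring

lemma unit_and_inv_bound (B : Matrix (Fin d) (Fin d) ℝ) (hb : matOpNorm B < 1)
    {t : ℝ} (ht0 : 0 ≤ t) (ht1 : t ≤ 1) :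
    IsUnit (1 + t • B).det ∧ matOpNorm (1 + t • B)⁻¹ ≤ (1 - matOpNorm B)⁻¹ := by
  set f := Matrix.toEuclideanCLM (𝕜 := ℝ) (n := Fin d) with hf
  set x : EuclideanSpace ℝ (Fin d) →L[ℝ] EuclideanSpace ℝ (Fin d) := -(t • f B) with hxdef
  have hb0 : 0 ≤ matOpNorm B := norm_nonneg _
  have hxnorm : ‖x‖ = t * matOpNorm B := by
    rw [hxdef, norm_neg, norm_smul t (f B), Real.norm_eq_abs, abs_of_nonneg ht0]
    rfl
  have hxle : ‖x‖ ≤ matOpNorm B := by rw [hxnorm]; nlinarith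
  have hx1 : ‖x‖ < 1 := lt_of_le_of_lt hxle hb
  have hmap : f (1 + t • B) = 1 - x := by
    rw [map_add, _root_.map_one, _root_.map_smul, hxdef, sub_neg_eq_add]
  have hunit : IsUnit (1 + t • B) := by
    have h1 : IsUnit (1 - x) := isUnit_one_sub_of_norm_lt_one hx1
    have h2 := h1.map f.symm
    rwa [← hmap, StarAlgEquiv.symm_apply_apply] at h2
  have hdet := (Matrix.isUnit_iff_isUnit_det _).mp hunit
  refine ⟨hdet, ?_⟩
  have hinv : f ((1 + t • B)⁻¹) = ∑' n : ℕ, x ^ n := by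
    have h1 : (1 + t • B)⁻¹ * (1 + t • B) = 1 := Matrix.nonsing_inv_mul _ hdet
    have h2 : f ((1 + t • B)⁻¹) * (1 - x) = 1 := by
      rw [← hmap, ← _root_.map_mul, h1, _root_.map_one]
    calc f ((1 + t • B)⁻¹) = f ((1 + t • B)⁻¹) * ((1 - x) * ∑' n : ℕ, x ^ n) := by
          rw [mul_neg_geom_series x hx1, mul_one]
      _ = (f ((1 + t • B)⁻¹) * (1 - x)) * ∑' n : ℕ, x ^ n := by rw [mul_assoc]
      _ = ∑' n : ℕ, x ^ n := by rw [h2, one_mul]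
  have hnorm1 : ‖(1 : EuclideanSpace ℝ (Fin d) →L[ℝ] EuclideanSpace ℝ (Fin d))‖ ≤ 1 := by
    rw [ContinuousLinearMap.one_def]
    exact ContinuousLinearMap.norm_id_le
  have hbound := tsum_geometric_le_of_norm_lt_one x hx1
  have hop : matOpNorm (1 + t • B)⁻¹ = ‖∑' n : ℕ, x ^ n‖ := by
    rw [matOpNorm, ← hf, hinv]
  have h1b : 0 < 1 - matOpNorm B := by linarith
  have hxx : (1 - ‖x‖)⁻¹ ≤ (1 - matOpNorm B)⁻¹ := by
    apply inv_anti₀ h1b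
    linarith
  rw [hop]
  calc ‖∑' n : ℕ, x ^ n‖ ≤ ‖(1 : EuclideanSpace ℝ (Fin d) →L[ℝ] EuclideanSpace ℝ (Fin d))‖
        - 1 + (1 - ‖x‖)⁻¹ := hbound
    _ ≤ (1 - ‖x‖)⁻¹ := by linarith
    _ ≤ (1 - matOpNorm B)⁻¹ := hxx

lemma hasDerivAt_det_zero (M : Matrix (Fin d) (Fin d) ℝ) :
    HasDerivAt (fun r : ℝ => (1 + r • M).det) M.trace 0 := by
  set p := ((1 + (Polynomial.X : Polynomial ℝ) • M.map Polynomial.C).det).divX.divX with hp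
  have hfun : (fun r : ℝ => (1 + r • M).det)
      = fun r => 1 + M.trace * r + p.eval r * r ^ 2 := by
    funext r
    exact Matrix.det_one_add_smul r M
  rw [hfun]
  have h0 : HasDerivAt (fun r : ℝ => 1 + M.trace * r) M.trace 0 := by
    simpa using (hasDerivAt_const (0:ℝ) (1:ℝ)).fun_add ((hasDerivAt_id (0:ℝ)).const_mul M.trace)
  have h1 : HasDerivAt (fun r : ℝ => p.eval r * r ^ 2)
      (p.derivative.eval 0 * 0 ^ 2 + p.eval 0 * ((2:ℕ) * 0 ^ 1)) 0 :=
    (Polynomial.hasDerivAt p 0).mul (hasDerivAt_pow 2 0)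
  have := h0.fun_add h1
  simpa using this

lemma hasDerivAt_det (B : Matrix (Fin d) (Fin d) ℝ) (t0 : ℝ)
    (hdet : IsUnit (1 + t0 • B).det) :
    HasDerivAt (fun t : ℝ => (1 + t • B).det)
      ((1 + t0 • B).det * ((1 + t0 • B)⁻¹ * B).trace) t0 := by
  set C := 1 + t0 • B with hC
  set D := C⁻¹ * B with hD
  have hCD : C * D = B := by
    rw [hD, ← mul_assoc, Matrix.mul_nonsing_inv _ hdet, one_mul]
  have key : (fun t : ℝ => (1 + t • B).det) = fun s => C.det * (1 + (s - t0) • D).det := by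
    funext s
    have hCe : C * (1 + (s - t0) • D) = 1 + s • B := by
      rw [mul_add, mul_one, Matrix.mul_smul, hCD, hC]
      module
    rw [← hCe, det_mul]
  rw [key]
  have h1 : HasDerivAt (fun r : ℝ => (1 + r • D).det) D.trace (t0 - t0) := by
    rw [sub_self]; exact hasDerivAt_det_zero D
  have h3 := h1.comp_sub_const t0 t0
  simpa using h3.const_mul C.det

end RumpAux

open RumpAux in
/-- Rump's estimate: if `‖A - I‖_op < 1` then
`Tr(A - I) - log (det A) ≤ ‖A - I‖_F² / (2 (1 - ‖A - I‖_op))`, and `det A > 0`. -/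
theorem trace_sub_log_det_le {d : ℕ} (A : Matrix (Fin d) (Fin d) ℝ)
    (hA : matOpNorm (A - 1) < 1) :
    (A - 1).trace - Real.log A.det ≤
        matFrobNorm (A - 1) ^ 2 / (2 * (1 - matOpNorm (A - 1))) ∧
      0 < A.det := by
  set B := A - 1 with hB
  set b := matOpNorm B with hbdef
  have hb0 : 0 ≤ b := norm_nonneg _
  have h1b : 0 < 1 - b := by linarith
  set K := matFrobNorm B ^ 2 / (1 - b) with hK
  have hK0 : 0 ≤ K := div_nonneg (sq_nonneg _) h1b.le
  set g : ℝ → ℝ := fun t => (1 + t • B).det with hg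
  have hAeq : A = 1 + (1:ℝ) • B := by
    rw [one_smul, hB]
    abel
  have hunit : ∀ t ∈ Set.Icc (0:ℝ) 1, IsUnit (1 + t • B).det :=
    fun t ht => (unit_and_inv_bound B hA ht.1 ht.2).1
  have hg0 : ∀ t ∈ Set.Icc (0:ℝ) 1, g t ≠ 0 := fun t ht => (hunit t ht).ne_zero
  have hgcont : Continuous g :=
    (continuous_const.add (continuous_id.smul continuous_const)).matrix_det
  have hgpos : 0 < g 1 := by
    by_contra h
    push_neg at h
    have h0 : g 0 = 1 := by simp [hg]
    have hmem : (0:ℝ) ∈ Set.Icc (g 1) (g 0) := ⟨h, by rw [h0]; norm_num⟩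
    obtain ⟨t, ht, hgt⟩ := intermediate_value_Icc' (by norm_num : (0:ℝ) ≤ 1)
      hgcont.continuousOn hmem
    exact hg0 t ht hgt
  have hdetA : A.det = g 1 := by rw [hg, hAeq]
  refine ⟨?_, by rw [hdetA]; exact hgpos⟩
  -- the function φ
  set φ : ℝ → ℝ := fun t => K * t ^ 2 / 2 - t * B.trace + Real.log (g t) with hφ
  have hderiv : ∀ t ∈ Set.Ioo (0:ℝ) 1,
      HasDerivAt φ (K * t - B.trace + ((1 + t • B)⁻¹ * B).trace) t := by
    intro t ht
    have htIcc : t ∈ Set.Icc (0:ℝ) 1 := ⟨ht.1.le, ht.2.le⟩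
    have hdet := hunit t htIcc
    have h1 : HasDerivAt (fun s : ℝ => K * s ^ 2 / 2) (K * t) t := by
      have h := (hasDerivAt_pow 2 t).const_mul (K / 2)
      have he : (fun x : ℝ => K / 2 * x ^ 2) = fun s : ℝ => K * s ^ 2 / 2 := by
        funext s; ring
      rw [he] at h
      refine h.congr_deriv ?_
      push_cast
      ring
    have h2 : HasDerivAt (fun s : ℝ => s * B.trace) B.trace t := hasDerivAt_mul_const B.trace
    have h3 := hasDerivAt_det B t hdet
    have h4 : HasDerivAt (fun s => Real.log (g s))
        ((1 + t • B).det * ((1 + t • B)⁻¹ * B).trace / g t) t := h3.log (hg0 t htIcc)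
    have h5 : (1 + t • B).det * ((1 + t • B)⁻¹ * B).trace / g t
        = ((1 + t • B)⁻¹ * B).trace :=
      mul_div_cancel_left₀ _ (hg0 t htIcc)
    rw [h5] at h4
    have := (h1.fun_sub h2).fun_add h4
    simpa using this
  have hbound : ∀ t ∈ Set.Ioo (0:ℝ) 1,
      0 ≤ K * t - B.trace + ((1 + t • B)⁻¹ * B).trace := by
    intro t ht
    have htIcc : t ∈ Set.Icc (0:ℝ) 1 := ⟨ht.1.le, ht.2.le⟩
    have hdet := hunit t htIcc
    have hopinv := (unit_and_inv_bound B hA ht.1.le ht.2.le).2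
    have hid : B - (1 + t • B)⁻¹ * B = t • ((1 + t • B)⁻¹ * B * B) := by
      have h2 : (1 + t • B)⁻¹ * ((1 + t • B) * B) = B := by
        rw [← mul_assoc, Matrix.nonsing_inv_mul _ hdet, one_mul]
      calc B - (1 + t • B)⁻¹ * B
          = (1 + t • B)⁻¹ * ((1 + t • B) * B) - (1 + t • B)⁻¹ * B := by rw [h2]
        _ = (1 + t • B)⁻¹ * ((1 + t • B) * B - B) := (mul_sub _ _ _).symm
        _ = (1 + t • B)⁻¹ * (t • (B * B)) := by
            congr 1
            rw [add_mul, one_mul, Matrix.smul_mul]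
            abel
        _ = t • ((1 + t • B)⁻¹ * B * B) := by rw [Matrix.mul_smul, mul_assoc]
    have htr : B.trace - ((1 + t • B)⁻¹ * B).trace = t * ((1 + t • B)⁻¹ * B * B).trace := by
      rw [← Matrix.trace_sub, hid, Matrix.trace_smul, smul_eq_mul]
    have hb1 : ((1 + t • B)⁻¹ * B * B).trace ≤ matOpNorm (1 + t • B)⁻¹ * matFrobNorm B ^ 2 :=
      trace_triple_le _ _
    have hb2 : matOpNorm (1 + t • B)⁻¹ * matFrobNorm B ^ 2 ≤ K := by
      rw [hK, div_eq_inv_mul]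
      exact mul_le_mul_of_nonneg_right hopinv (sq_nonneg _)
    have hb3 : B.trace - ((1 + t • B)⁻¹ * B).trace ≤ t * K := by
      rw [htr]
      exact mul_le_mul_of_nonneg_left (hb1.trans hb2) ht.1.le
    nlinarith
  have hcont : ContinuousOn φ (Set.Icc 0 1) := by
    apply ContinuousOn.add
    · exact (((continuous_const.mul (continuous_pow 2)).div_const 2).sub
        (continuous_id.mul continuous_const)).continuousOn
    · exact ContinuousOn.log hgcont.continuousOn hg0
  have hmono : MonotoneOn φ (Set.Icc (0:ℝ) 1) := by
    apply monotoneOn_of_deriv_nonneg (convex_Icc 0 1) hcont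
    · intro t ht
      rw [interior_Icc] at ht
      exact ((hderiv t ht).differentiableAt).differentiableWithinAt
    · intro t ht
      rw [interior_Icc] at ht
      rw [(hderiv t ht).deriv]
      exact hbound t ht
  have hφ0 : φ 0 = 0 := by
    simp [hφ, hg]
  have h01 := hmono (Set.left_mem_Icc.2 zero_le_one) (Set.right_mem_Icc.2 zero_le_one) zero_le_one
  rw [hφ0] at h01
  have hφ1 : φ 1 = K / 2 - B.trace + Real.log (g 1) := by
    rw [hφ]
    norm_num
  rw [hφ1] at h01
  have hfinal : B.trace - Real.log (g 1) ≤ K / 2 := by linarith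
  rw [hdetA]
  have hK2 : K / 2 = matFrobNorm B ^ 2 / (2 * (1 - b)) := by
    rw [hK, div_div, mul_comm]
  linarith [hfinal, hK2.le]
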